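/- There exist a type X and a decision procedure P on Tree X such that P satisfies T-independence of irrelevant alternatives (TIIA) but P is not strongly inductive (SIND). (For example, the larger-sub-problem-bias procedure: fix a linear order on X and a threshold N ≥ 1; on trees a with |⟦a⟧| ≤ N return the maximum of ⟦a⟧, and on a node recurse into the sub-tree whose extension is largest.) -/

import Mathlib

/-- The algebraic datatype `Tree3 X` (the paper's `Tree`) of ternary trees with values at the leaves. -/
inductive Tree3 (X : Type) : Type where
  | Leaf : X → Tree3 X
  | Node : Tree3 X → Tree3 X → Tree3 X → Tree3 X

/-- The extension of a represented decision problem on `Tree3`. -/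
def Tree3.ext {X : Type} [DecidableEq X] : Tree3 X → Finset X
  | .Leaf x => {x}
  | .Node t₁ t₂ t₃ => t₁.ext ∪ t₂.ext ∪ t₃.ext


def myP : Tree3 ℕ → ℕ
  | .Leaf x => x
  | .Node t₁ t₂ t₃ => if 2 ≤ t₁.ext.card then myP t₁ else myP t₂

lemma myP_mem : ∀ a : Tree3 ℕ, myP a ∈ a.ext
  | .Leaf x => by simp [myP, Tree3.ext]
  | .Node t₁ t₂ t₃ => by
      simp only [myP, Tree3.ext]
      split
      · exact Finset.mem_union_left _ (Finset.mem_union_left _ (myP_mem t₁))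
      · exact Finset.mem_union_left _ (Finset.mem_union_right _ (myP_mem t₂))

lemma exists_tree_ext (s : Finset ℕ) (hs : s.Nonempty) : ∃ b : Tree3 ℕ, b.ext = s := by
  induction s using Finset.induction with
  | empty => exact absurd hs (by simp)
  | @insert a s ha ih =>
    rcases s.eq_empty_or_nonempty with h | h
    · exact ⟨.Leaf a, by simp [Tree3.ext, h]⟩
    · obtain ⟨b, hb⟩ := ih h
      exact ⟨.Node b (.Leaf a) (.Leaf a), by
        simp [Tree3.ext, hb, Finset.union_comm, Finset.insert_eq, -Finset.union_singleton]⟩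

/-- There are a type `X` and a decision procedure `P` on `Tree3 X`
satisfying T-independence of irrelevant alternatives but not strongly inductive. -/
theorem stmt_17 : ∃ (X : Type) (inst : DecidableEq X),
    letI := inst
    ∃ P : Tree3 X → X,
      (∀ a : Tree3 X, P a ∈ a.ext) ∧
      -- TIIA
      (∀ (t₁ t₂ t₃ : Tree3 X) (x y : X), P (Tree3.Node t₁ t₂ t₃) = x → P t₁ = y → y ≠ x →
        ∃ b : Tree3 X, b.ext = (t₁.ext \ {y}) ∪ {x} ∧ P (Tree3.Node b t₂ t₃) = x) ∧
      (∀ (t₁ t₂ t₃ : Tree3 X) (x y : X), P (Tree3.Node t₁ t₂ t₃) = x → P t₂ = y → y ≠ x →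
        ∃ b : Tree3 X, b.ext = (t₂.ext \ {y}) ∪ {x} ∧ P (Tree3.Node t₁ b t₃) = x) ∧
      (∀ (t₁ t₂ t₃ : Tree3 X) (x y : X), P (Tree3.Node t₁ t₂ t₃) = x → P t₃ = y → y ≠ x →
        ∃ b : Tree3 X, b.ext = (t₃.ext \ {y}) ∪ {x} ∧ P (Tree3.Node t₁ t₂ b) = x) ∧
      -- not SIND
      ¬(∀ x₁ x₂ x₃ : X,
          (∀ t₁ t₂ t₃ : Tree3 X, P t₁ = x₁ → P t₂ = x₂ → P t₃ = x₃ →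
            P (Tree3.Node t₁ t₂ t₃) = x₁) ∨
          (∀ t₁ t₂ t₃ : Tree3 X, P t₁ = x₁ → P t₂ = x₂ → P t₃ = x₃ →
            P (Tree3.Node t₁ t₂ t₃) = x₂) ∨
          (∀ t₁ t₂ t₃ : Tree3 X, P t₁ = x₁ → P t₂ = x₂ → P t₃ = x₃ →
            P (Tree3.Node t₁ t₂ t₃) = x₃)) := by
  refine ⟨ℕ, inferInstance, myP, myP_mem, ?_, ?_, ?_, ?_⟩
  · -- slot 1
    intro t₁ t₂ t₃ x y hP h1 hyx
    have hcard : ¬ 2 ≤ t₁.ext.card := by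
      intro h
      rw [show myP (Tree3.Node t₁ t₂ t₃) = myP t₁ from by simp [myP, h]] at hP
      exact hyx (h1.symm.trans hP)
    have hx : myP t₂ = x := by
      rwa [show myP (Tree3.Node t₁ t₂ t₃) = myP t₂ from by simp [myP, hcard]] at hP
    have hext : t₁.ext = {y} := by
      have hy : y ∈ t₁.ext := h1 ▸ myP_mem t₁
      refine Finset.eq_singleton_iff_unique_mem.mpr ⟨hy, fun z hz => ?_⟩
      exact Finset.card_le_one.mp (by omega) z hz y hy
    refine ⟨.Leaf x, by simp [Tree3.ext, hext], ?_⟩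
    simp [myP, Tree3.ext, hx]
  · -- slot 2
    intro t₁ t₂ t₃ x y hP h2 hyx
    have hcard : 2 ≤ t₁.ext.card := by
      by_contra h
      rw [show myP (Tree3.Node t₁ t₂ t₃) = myP t₂ from by simp [myP, h]] at hP
      exact hyx (h2.symm.trans hP)
    have hx : myP t₁ = x := by
      rwa [show myP (Tree3.Node t₁ t₂ t₃) = myP t₁ from by simp [myP, hcard]] at hP
    obtain ⟨b, hb⟩ := exists_tree_ext ((t₂.ext \ {y}) ∪ {x}) ⟨x, by simp⟩
    exact ⟨b, hb, by simp [myP, hcard, hx]⟩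
  · -- slot 3
    intro t₁ t₂ t₃ x y hP h3 hyx
    obtain ⟨b, hb⟩ := exists_tree_ext ((t₃.ext \ {y}) ∪ {x}) ⟨x, by simp⟩
    refine ⟨b, hb, ?_⟩
    rw [← hP]; simp [myP]
  · -- not SIND
    intro h
    rcases h 0 1 2 with h | h | h
    · have := h (.Leaf 0) (.Leaf 1) (.Leaf 2) rfl rfl rfl
      simp [myP, Tree3.ext] at this
    · set T : Tree3 ℕ := .Node (.Leaf 5) (.Leaf 0) (.Leaf 0) with hT
      have hPT : myP T = 0 := by simp [myP, hT, Tree3.ext]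
      have := h T (.Leaf 1) (.Leaf 2) hPT rfl rfl
      rw [show myP (Tree3.Node T (Tree3.Leaf 1) (Tree3.Leaf 2)) = myP T from by
        simp [myP, hT, Tree3.ext]] at this
      simp [hPT] at this
    · have := h (.Leaf 0) (.Leaf 1) (.Leaf 2) rfl rfl rfl
      simp [myP, Tree3.ext] at this
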